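/- Let dw(x) = ∏_{α∈R}|⟨x,α⟩|^{k(α)} dx with R finite, k ≥ 0. There exist constants 0 < c₁ ≤ c₂ such that for all x ∈ ℝ^N and r > 0, c₁ r^N ∏_{α∈R}(|⟨x,α⟩| + r)^{k(α)} ≤ w(B(x,r)) ≤ c₂ r^N ∏_{α∈R}(|⟨x,α⟩| + r)^{k(α)}. Consequently dw is a doubling measure. -/

import Mathlib

open Metric MeasureTheory ENNReal


-- helper 1: generic vector
lemma gen_vec (N : ℕ) (hN : 0 < N) (R : Finset (EuclideanSpace ℝ (Fin N)))
    (hR0 : (0 : EuclideanSpace ℝ (Fin N)) ∉ R) :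
    ∃ v : EuclideanSpace ℝ (Fin N), v ≠ 0 ∧ ∀ α ∈ R, (inner ℝ v α : ℝ) ≠ 0 := by
  haveI : Nontrivial (EuclideanSpace ℝ (Fin N)) :=
    Module.nontrivial_of_finrank_pos (by rw [finrank_euclideanSpace_fin]; exact hN)
  set A : Set (EuclideanSpace ℝ (Fin N)) :=
    (⋃ α ∈ R, {v | (inner ℝ v α : ℝ) = 0}) ∪ (⊥ : Submodule ℝ (EuclideanSpace ℝ (Fin N)))
  have hA : volume A = 0 := by
    refine measure_union_null ?_ ?_
    · refine le_zero_iff.mp ((measure_biUnion_finset_le _ _).trans_eq ?_)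
      rw [Finset.sum_eq_zero]
      intro α hα
      have hα0 : α ≠ 0 := fun h => hR0 (h ▸ hα)
      have : {v : EuclideanSpace ℝ (Fin N) | (inner ℝ v α : ℝ) = 0}
          = (LinearMap.ker ((innerSL ℝ α : EuclideanSpace ℝ (Fin N) →L[ℝ] ℝ) : EuclideanSpace ℝ (Fin N) →ₗ[ℝ] ℝ) : Submodule ℝ (EuclideanSpace ℝ (Fin N))) := by
        ext v
        simp only [LinearMap.mem_ker, ContinuousLinearMap.coe_coe, innerSL_apply_apply, Set.mem_setOf_eq, SetLike.mem_coe]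
        rw [real_inner_comm]
      rw [this]
      exact Measure.addHaar_submodule _ _ (fun h => by
        have := h ▸ Submodule.mem_top (R := ℝ) (x := α)
        rw [LinearMap.mem_ker] at this
        simp only [ContinuousLinearMap.coe_coe, innerSL_apply_apply] at this
        exact hα0 (inner_self_eq_zero.mp this))
    · exact Measure.addHaar_submodule _ _ bot_ne_top
  have : A ≠ Set.univ := by
    intro h
    have := hA
    rw [h] at this
    exact (IsOpen.measure_pos volume isOpen_univ Set.univ_nonempty).ne' this
  obtain ⟨v, hv⟩ : ∃ v, v ∉ A := by
    by_contra h
    push_neg at h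
    exact this (Set.eq_univ_of_forall h)
  refine ⟨v, ?_, ?_⟩
  · intro h
    exact hv (Set.mem_union_right _ (by simp [h]))
  · intro α hα h
    exact hv (Set.mem_union_left _ (Set.mem_biUnion hα h))


lemma good_t {X : Type*} (ι : Finset X) (a d : X → ℝ) (hd : ∀ i ∈ ι, d i ≠ 0)
    (δ L : ℝ) (hδ : 0 < δ) (hL : (∑ i ∈ ι, 2 * δ / |d i|) < L) :
    ∃ t, 0 ≤ t ∧ t ≤ L ∧ ∀ i ∈ ι, δ ≤ |a i + t * d i| := by
  set Bad : X → Set ℝ := fun i => Set.Icc (-(a i) / d i - δ / |d i|) (-(a i) / d i + δ / |d i|)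
  have hvol : volume (⋃ i ∈ ι, Bad i) < volume (Set.Icc (0:ℝ) L) := by
    refine (measure_biUnion_finset_le _ _).trans_lt ?_
    have h1 : ∀ i ∈ ι, volume (Bad i) = ENNReal.ofReal (2 * δ / |d i|) := by
      intro i hi
      rw [Real.volume_Icc]
      congr 1
      have : |d i| ≠ 0 := abs_ne_zero.mpr (hd i hi)
      field_simp
      ring
    rw [Finset.sum_congr rfl h1, ← ENNReal.ofReal_sum_of_nonneg, Real.volume_Icc, sub_zero]
    · exact (ENNReal.ofReal_lt_ofReal_iff_of_nonneg
        (Finset.sum_nonneg fun i hi => by positivity)).mpr hL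
    · intro i hi
      positivity
  have hne : (Set.Icc (0:ℝ) L \ ⋃ i ∈ ι, Bad i).Nonempty := by
    by_contra h
    rw [Set.not_nonempty_iff_eq_empty, Set.diff_eq_empty] at h
    exact absurd (measure_mono h) (not_le.mpr hvol)
  obtain ⟨t, ⟨ht0, htL⟩, htB⟩ := hne
  refine ⟨t, ht0, htL, fun i hi => ?_⟩
  have hdi : d i ≠ 0 := hd i hi
  have h1 : t ∉ Bad i := fun h => htB (Set.mem_biUnion hi h)
  simp only [Bad, Set.mem_Icc, not_and, not_le] at h1
  have hpos : 0 < δ / |d i| := div_pos hδ (abs_pos.mpr hdi)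
  have h2 : δ / |d i| < |t - -(a i) / d i| := by
    rcases lt_or_ge t (-(a i) / d i - δ / |d i|) with h | h
    · have e : |t - -(a i) / d i| = -(a i) / d i - t := by
        rw [abs_sub_comm]; exact abs_of_pos (by linarith)
      rw [e]; linarith
    · have h3 := h1 h
      have e : |t - -(a i) / d i| = t - -(a i) / d i := abs_of_pos (by linarith)
      rw [e]; linarith
  have key : |a i + t * d i| = |d i| * |t - -(a i) / d i| := by
    rw [← abs_mul]
    congr 1
    field_simp
    ring
  rw [key]
  calc δ = |d i| * (δ / |d i|) := by field_simp
    _ ≤ |d i| * |t - -(a i) / d i| := by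
        exact mul_le_mul_of_nonneg_left h2.le (abs_nonneg _)

set_option maxHeartbeats 2000000 in
lemma dunkl_est (N : ℕ) (hN : 0 < N)
    (R : Finset (EuclideanSpace ℝ (Fin N))) (hR0 : (0 : EuclideanSpace ℝ (Fin N)) ∉ R)
    (k : EuclideanSpace ℝ (Fin N) → ℝ) (hk : ∀ α ∈ R, 0 ≤ k α) :
    ∃ c₁ c₂ : ℝ, 0 < c₁ ∧ c₁ ≤ c₂ ∧
      ∀ (x : EuclideanSpace ℝ (Fin N)) (r : ℝ), 0 < r →
        ENNReal.ofReal (c₁ * r ^ N * ∏ α ∈ R, (|(inner ℝ x α : ℝ)| + r) ^ (k α)) ≤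
            (volume.withDensity
              (fun x => ENNReal.ofReal (∏ α ∈ R, |(inner ℝ x α : ℝ)| ^ (k α))))
              (closedBall x r) ∧
          (volume.withDensity
              (fun x => ENNReal.ofReal (∏ α ∈ R, |(inner ℝ x α : ℝ)| ^ (k α))))
              (closedBall x r) ≤
            ENNReal.ofReal (c₂ * r ^ N * ∏ α ∈ R, (|(inner ℝ x α : ℝ)| + r) ^ (k α)) := by
  -- constants
  obtain ⟨M, hM1, hMα⟩ : ∃ M : ℝ, 1 ≤ M ∧ ∀ α ∈ R, ‖α‖ ≤ M := by
    refine ⟨1 + ∑ α ∈ R, ‖α‖,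
      le_add_of_nonneg_right (Finset.sum_nonneg fun _ _ => norm_nonneg _), fun α hα => ?_⟩
    have := Finset.single_le_sum (f := fun α : EuclideanSpace ℝ (Fin N) => ‖α‖)
      (fun _ _ => norm_nonneg _) hα
    linarith
  have hM0 : 0 < M := lt_of_lt_of_le one_pos hM1
  obtain ⟨v, hv0, hvα⟩ := gen_vec N hN R hR0
  have hvn : 0 < ‖v‖ := norm_pos_iff.mpr hv0
  obtain ⟨δ₀, hδ₀0, hδ₀key⟩ : ∃ δ₀ : ℝ, 0 < δ₀ ∧
      ∀ r : ℝ, 0 < r →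
        (∑ α ∈ R, 2 * (δ₀ * r) / |(inner ℝ v α : ℝ)|) < r / (2 * ‖v‖) := by
    set S : ℝ := ∑ α ∈ R, 1 / |(inner ℝ v α : ℝ)| with hS
    have hS0 : 0 ≤ S := Finset.sum_nonneg fun _ _ => by positivity
    refine ⟨1 / (8 * ‖v‖ * (S + 1)), by positivity, fun r hr => ?_⟩
    have hsum : ∑ α ∈ R, 2 * ((1 / (8 * ‖v‖ * (S + 1))) * r) / |(inner ℝ v α : ℝ)|
        = 2 * (1 / (8 * ‖v‖ * (S + 1))) * r * S := by
      rw [hS, Finset.mul_sum]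
      refine Finset.sum_congr rfl fun α hα => ?_
      field_simp
    have hkey : 2 * (1 / (8 * ‖v‖ * (S + 1))) * S < 1 / (2 * ‖v‖) := by
      have he : 2 * (1 / (8 * ‖v‖ * (S + 1))) * S = S / (4 * ‖v‖ * (S + 1)) := by
        field_simp; ring
      rw [he, div_lt_div_iff₀ (by positivity) (by positivity)]
      nlinarith
    calc ∑ α ∈ R, 2 * ((1 / (8 * ‖v‖ * (S + 1))) * r) / |(inner ℝ v α : ℝ)|
        = (2 * (1 / (8 * ‖v‖ * (S + 1))) * S) * r := by rw [hsum]; ring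
      _ < (1 / (2 * ‖v‖)) * r := mul_lt_mul_of_pos_right hkey hr
      _ = r / (2 * ‖v‖) := by ring
  obtain ⟨ε, hε0, hε1, hεM⟩ : ∃ ε : ℝ, 0 < ε ∧ ε ≤ 1 / 2 ∧ ε * M ≤ δ₀ / 2 := by
    refine ⟨min (δ₀ / (2 * M)) (1 / 2), lt_min (by positivity) (by norm_num),
      min_le_right _ _, ?_⟩
    calc min (δ₀ / (2 * M)) (1 / 2) * M ≤ (δ₀ / (2 * M)) * M :=
          mul_le_mul_of_nonneg_right (min_le_left _ _) hM0.le
      _ = δ₀ / 2 := by field_simp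
  obtain ⟨c, hc0, hc1, hcM⟩ : ∃ c : ℝ, 0 < c ∧ c ≤ 1 / 4 ∧ c * (3 * M) ≤ δ₀ / 2 := by
    refine ⟨min (δ₀ / (6 * M)) (1 / 4), lt_min (by positivity) (by norm_num),
      min_le_right _ _, ?_⟩
    calc min (δ₀ / (6 * M)) (1 / 4) * (3 * M) ≤ (δ₀ / (6 * M)) * (3 * M) :=
          mul_le_mul_of_nonneg_right (min_le_left _ _) (by positivity)
      _ = δ₀ / 2 := by field_simp; ring
  set K : ℝ := ∑ α ∈ R, k α with hK
  have hK0 : 0 ≤ K := Finset.sum_nonneg hk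
  obtain ⟨Vr, hVr0, hVreq⟩ : ∃ Vr : ℝ, 0 < Vr ∧
      volume (ball (0 : EuclideanSpace ℝ (Fin N)) 1) = ENNReal.ofReal Vr := by
    refine ⟨(volume (ball (0 : EuclideanSpace ℝ (Fin N)) 1)).toReal,
      ENNReal.toReal_pos (measure_ball_pos _ _ one_pos).ne' measure_ball_lt_top.ne,
      (ENNReal.ofReal_toReal measure_ball_lt_top.ne).symm⟩
  have hfrk : Module.finrank ℝ (EuclideanSpace ℝ (Fin N)) = N :=
    finrank_euclideanSpace_fin
  have hcM' : c ≤ M := by nlinarith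
  refine ⟨c ^ K * ε ^ N * Vr, M ^ K * Vr, by positivity, ?_, ?_⟩
  · have h1 : c ^ K ≤ M ^ K := Real.rpow_le_rpow hc0.le hcM' hK0
    have h2 : ε ^ N ≤ 1 := pow_le_one₀ hε0.le (by linarith)
    have h3 : (0:ℝ) < c ^ K := Real.rpow_pos_of_pos hc0 K
    have h4 : (0:ℝ) < ε ^ N := pow_pos hε0 N
    calc c ^ K * ε ^ N * Vr ≤ (M ^ K * 1) * Vr := by
          refine mul_le_mul_of_nonneg_right ?_ hVr0.le
          exact mul_le_mul h1 h2 h4.le (Real.rpow_nonneg hM0.le K)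
      _ = M ^ K * Vr := by ring
  intro x r hr
  have hA0 : ∀ α : EuclideanSpace ℝ (Fin N), 0 < |(inner ℝ x α : ℝ)| + r :=
    fun α => add_pos_of_nonneg_of_pos (abs_nonneg _) hr
  have hP0 : 0 ≤ ∏ α ∈ R, (|(inner ℝ x α : ℝ)| + r) ^ (k α) :=
    Finset.prod_nonneg fun α _ => Real.rpow_nonneg (hA0 α).le _
  have hpert : ∀ (y y' α : EuclideanSpace ℝ (Fin N)), α ∈ R →
      |(inner ℝ y α : ℝ)| ≤ |(inner ℝ y' α : ℝ)| + ‖y - y'‖ * M := by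
    intro y y' α hα
    have h1 : (inner ℝ y α : ℝ) = inner ℝ y' α + (inner ℝ (y - y') α : ℝ) := by
      rw [inner_sub_left]; ring
    have h2 : |(inner ℝ (y - y') α : ℝ)| ≤ ‖y - y'‖ * ‖α‖ := abs_real_inner_le_norm _ _
    have h3 : ‖y - y'‖ * ‖α‖ ≤ ‖y - y'‖ * M :=
      mul_le_mul_of_nonneg_left (hMα α hα) (norm_nonneg _)
    calc |(inner ℝ y α : ℝ)| ≤ |(inner ℝ y' α : ℝ)| + |(inner ℝ (y - y') α : ℝ)| := by
          rw [h1]; exact abs_add_le _ _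
      _ ≤ _ := by linarith
  constructor
  · -- LOWER BOUND
    obtain ⟨t, ht0, htL, htq⟩ := good_t R (fun α => (inner ℝ x α : ℝ))
      (fun α => (inner ℝ v α : ℝ)) hvα (δ₀ * r) (r / (2 * ‖v‖)) (by positivity)
      (hδ₀key r hr)
    have hzx : ‖(x + t • v) - x‖ ≤ r / 2 := by
      have he : (x + t • v) - x = t • v := by abel
      rw [he, norm_smul, Real.norm_eq_abs, abs_of_nonneg ht0]
      calc t * ‖v‖ ≤ (r / (2 * ‖v‖)) * ‖v‖ := mul_le_mul_of_nonneg_right htL (norm_nonneg _)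
        _ = r / 2 := by field_simp
    have hzα : ∀ α ∈ R, δ₀ * r ≤ |(inner ℝ (x + t • v) α : ℝ)| := by
      intro α hα
      have he : (inner ℝ (x + t • v) α : ℝ) = inner ℝ x α + t * inner ℝ v α := by
        rw [inner_add_left, real_inner_smul_left]
      rw [he]; exact htq α hα
    have hρ0 : 0 < ε * r := mul_pos hε0 hr
    have hsub : closedBall (x + t • v) (ε * r) ⊆ closedBall x r := by
      intro y hy
      rw [mem_closedBall] at hy ⊢
      have h1 : dist y x ≤ dist y (x + t • v) + dist (x + t • v) x := dist_triangle _ _ _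
      have h2 : dist (x + t • v) x ≤ r / 2 := by rw [dist_eq_norm]; exact hzx
      have h3 : ε * r ≤ r / 2 := by
        calc ε * r ≤ (1/2) * r := mul_le_mul_of_nonneg_right hε1 hr.le
          _ = r / 2 := by ring
      linarith
    have hlow : ∀ y ∈ closedBall (x + t • v) (ε * r), ∀ α ∈ R,
        c * (|(inner ℝ x α : ℝ)| + r) ≤ |(inner ℝ y α : ℝ)| := by
      intro y hy α hα
      rw [mem_closedBall, dist_eq_norm] at hy
      have hy1 : δ₀ * r / 2 ≤ |(inner ℝ y α : ℝ)| := by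
        have h1 := hpert (x + t • v) y α hα
        have h2 : ‖(x + t • v) - y‖ * M ≤ δ₀ * r / 2 := by
          have hn : ‖(x + t • v) - y‖ ≤ ε * r := by rwa [norm_sub_rev]
          calc ‖(x + t • v) - y‖ * M ≤ (ε * r) * M :=
                mul_le_mul_of_nonneg_right hn hM0.le
            _ = (ε * M) * r := by ring
            _ ≤ (δ₀ / 2) * r := mul_le_mul_of_nonneg_right hεM hr.le
            _ = δ₀ * r / 2 := by ring
        have h3 := hzα α hα
        linarith
      rcases le_or_gt (|(inner ℝ x α : ℝ)|) (2 * M * r) with hnear | hfar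
      · have h1 : |(inner ℝ x α : ℝ)| + r ≤ 3 * M * r := by nlinarith
        calc c * (|(inner ℝ x α : ℝ)| + r) ≤ c * (3 * M * r) :=
              mul_le_mul_of_nonneg_left h1 hc0.le
          _ = (c * (3 * M)) * r := by ring
          _ ≤ (δ₀ / 2) * r := mul_le_mul_of_nonneg_right hcM hr.le
          _ = δ₀ * r / 2 := by ring
          _ ≤ _ := hy1
      · have hyx : ‖y - x‖ ≤ r := by
          have := hsub hy
          rwa [mem_closedBall, dist_eq_norm] at this
        have h1 := hpert x y α hα
        rw [norm_sub_rev] at h1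
        have h2 : ‖y - x‖ * M ≤ r * M := mul_le_mul_of_nonneg_right hyx hM0.le
        have h3 : |(inner ℝ x α : ℝ)| / 2 ≤ |(inner ℝ y α : ℝ)| := by nlinarith
        have h4 : r ≤ |(inner ℝ x α : ℝ)| := by nlinarith
        nlinarith
    have hflow : ∀ y ∈ closedBall (x + t • v) (ε * r),
        ENNReal.ofReal (c ^ K * ∏ α ∈ R, (|(inner ℝ x α : ℝ)| + r) ^ (k α)) ≤
          ENNReal.ofReal (∏ α ∈ R, |(inner ℝ y α : ℝ)| ^ (k α)) := by
      intro y hy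
      apply ENNReal.ofReal_le_ofReal
      have h1 : c ^ K * ∏ α ∈ R, (|(inner ℝ x α : ℝ)| + r) ^ (k α)
          = ∏ α ∈ R, (c * (|(inner ℝ x α : ℝ)| + r)) ^ k α := by
        rw [hK, Real.rpow_sum_of_pos hc0, ← Finset.prod_mul_distrib]
        refine Finset.prod_congr rfl fun α hα => ?_
        rw [Real.mul_rpow hc0.le (hA0 α).le]
      rw [h1]
      refine Finset.prod_le_prod (fun α hα => by positivity) fun α hα => ?_
      exact Real.rpow_le_rpow (by positivity) (hlow y hy α hα) (hk α hα)
    calc ENNReal.ofReal (c ^ K * ε ^ N * Vr * r ^ N *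
          ∏ α ∈ R, (|(inner ℝ x α : ℝ)| + r) ^ (k α))
        = ENNReal.ofReal (c ^ K * ∏ α ∈ R, (|(inner ℝ x α : ℝ)| + r) ^ (k α)) *
            (ENNReal.ofReal ((ε * r) ^ N) *
              volume (ball (0 : EuclideanSpace ℝ (Fin N)) 1)) := by
          rw [hVreq, ← ENNReal.ofReal_mul (by positivity),
            ← ENNReal.ofReal_mul (by positivity)]
          congr 1
          rw [mul_pow]
          ring
      _ = ENNReal.ofReal (c ^ K * ∏ α ∈ R, (|(inner ℝ x α : ℝ)| + r) ^ (k α)) *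
            volume (closedBall (x + t • v) (ε * r)) := by
          rw [Measure.addHaar_closedBall _ _ hρ0.le, hfrk]
      _ = ∫⁻ _ in closedBall (x + t • v) (ε * r),
            ENNReal.ofReal (c ^ K * ∏ α ∈ R, (|(inner ℝ x α : ℝ)| + r) ^ (k α)) := by
          rw [setLIntegral_const, mul_comm]
      _ ≤ ∫⁻ y in closedBall (x + t • v) (ε * r),
            ENNReal.ofReal (∏ α ∈ R, |(inner ℝ y α : ℝ)| ^ (k α)) :=
          setLIntegral_mono' measurableSet_closedBall hflow
      _ = (volume.withDensity
            (fun x => ENNReal.ofReal (∏ α ∈ R, |(inner ℝ x α : ℝ)| ^ (k α))))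
            (closedBall (x + t • v) (ε * r)) :=
          (withDensity_apply _ measurableSet_closedBall).symm
      _ ≤ _ := measure_mono hsub
  · -- UPPER BOUND
    have hfhi : ∀ y ∈ closedBall x r,
        ENNReal.ofReal (∏ α ∈ R, |(inner ℝ y α : ℝ)| ^ (k α)) ≤
          ENNReal.ofReal (M ^ K * ∏ α ∈ R, (|(inner ℝ x α : ℝ)| + r) ^ (k α)) := by
      intro y hy
      rw [mem_closedBall, dist_eq_norm] at hy
      apply ENNReal.ofReal_le_ofReal
      have h1 : M ^ K * ∏ α ∈ R, (|(inner ℝ x α : ℝ)| + r) ^ (k α)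
          = ∏ α ∈ R, (M * (|(inner ℝ x α : ℝ)| + r)) ^ k α := by
        rw [hK, Real.rpow_sum_of_pos hM0, ← Finset.prod_mul_distrib]
        refine Finset.prod_congr rfl fun α hα => ?_
        rw [Real.mul_rpow hM0.le (hA0 α).le]
      rw [h1]
      refine Finset.prod_le_prod (fun α hα => Real.rpow_nonneg (abs_nonneg _) _)
        fun α hα => ?_
      refine Real.rpow_le_rpow (abs_nonneg _) ?_ (hk α hα)
      have h2 := hpert y x α hα
      have h3 : ‖y - x‖ * M ≤ r * M := mul_le_mul_of_nonneg_right hy hM0.le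
      nlinarith [mul_nonneg (by linarith : (0:ℝ) ≤ M - 1) (abs_nonneg (inner ℝ x α : ℝ))]
    calc (volume.withDensity
          (fun x => ENNReal.ofReal (∏ α ∈ R, |(inner ℝ x α : ℝ)| ^ (k α))))
          (closedBall x r)
        = ∫⁻ y in closedBall x r,
            ENNReal.ofReal (∏ α ∈ R, |(inner ℝ y α : ℝ)| ^ (k α)) :=
          withDensity_apply _ measurableSet_closedBall
      _ ≤ ∫⁻ _ in closedBall x r,
            ENNReal.ofReal (M ^ K * ∏ α ∈ R, (|(inner ℝ x α : ℝ)| + r) ^ (k α)) :=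
          setLIntegral_mono' measurableSet_closedBall hfhi
      _ = ENNReal.ofReal (M ^ K * ∏ α ∈ R, (|(inner ℝ x α : ℝ)| + r) ^ (k α)) *
            volume (closedBall x r) := by
          rw [setLIntegral_const]
      _ = ENNReal.ofReal (M ^ K * Vr * r ^ N *
            ∏ α ∈ R, (|(inner ℝ x α : ℝ)| + r) ^ (k α)) := by
          rw [Measure.addHaar_closedBall _ _ hr.le, hfrk, hVreq,
            ← ENNReal.ofReal_mul (by positivity),
            ← ENNReal.ofReal_mul (by positivity)]
          congr 1
          ring

theorem dunkl_ball_volume_estimate (N : ℕ) (hN : 0 < N)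
    (R : Finset (EuclideanSpace ℝ (Fin N))) (hR0 : (0 : EuclideanSpace ℝ (Fin N)) ∉ R)
    (k : EuclideanSpace ℝ (Fin N) → ℝ) (hk : ∀ α ∈ R, 0 ≤ k α)
    -- `R` is invariant under the reflections `σ_α`, `α ∈ R`, and `k` is invariant as well
    (hRinv : ∀ α ∈ R, ∀ β ∈ R,
      β - ((2 * (inner ℝ β α : ℝ) / ‖α‖ ^ 2) : ℝ) • α ∈ R)
    (hkinv : ∀ α ∈ R, ∀ β ∈ R,
      k (β - ((2 * (inner ℝ β α : ℝ) / ‖α‖ ^ 2) : ℝ) • α) = k β)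
    (w : Measure (EuclideanSpace ℝ (Fin N)))
    (hw : w = volume.withDensity
      (fun x => ENNReal.ofReal (∏ α ∈ R, |(inner ℝ x α : ℝ)| ^ (k α)))) :
    (∃ c₁ c₂ : ℝ, 0 < c₁ ∧ c₁ ≤ c₂ ∧
      ∀ (x : EuclideanSpace ℝ (Fin N)) (r : ℝ), 0 < r →
        ENNReal.ofReal (c₁ * r ^ N * ∏ α ∈ R, (|(inner ℝ x α : ℝ)| + r) ^ (k α)) ≤
            w (closedBall x r) ∧
          w (closedBall x r) ≤
            ENNReal.ofReal (c₂ * r ^ N * ∏ α ∈ R, (|(inner ℝ x α : ℝ)| + r) ^ (k α))) ∧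
    (∃ Cd : ℝ, 0 < Cd ∧ ∀ (x : EuclideanSpace ℝ (Fin N)) (r : ℝ), 0 < r →
      w (closedBall x (2 * r)) ≤ ENNReal.ofReal Cd * w (closedBall x r)) := by
  obtain ⟨c₁, c₂, hc₁, hc₁₂, hest⟩ := dunkl_est N hN R hR0 k hk
  rw [hw]
  have hc₂ : 0 < c₂ := lt_of_lt_of_le hc₁ hc₁₂
  refine ⟨⟨c₁, c₂, hc₁, hc₁₂, hest⟩, ?_⟩
  set K : ℝ := ∑ α ∈ R, k α with hKdef
  have hK0 : 0 ≤ K := Finset.sum_nonneg hk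
  have h2K : (0:ℝ) < 2 ^ K := Real.rpow_pos_of_pos two_pos K
  refine ⟨c₂ * 2 ^ N * 2 ^ K / c₁, by positivity, fun x r hr => ?_⟩
  have hA0 : ∀ α : EuclideanSpace ℝ (Fin N), 0 < |(inner ℝ x α : ℝ)| + r :=
    fun α => add_pos_of_nonneg_of_pos (abs_nonneg _) hr
  have hP1 : 0 ≤ ∏ α ∈ R, (|(inner ℝ x α : ℝ)| + r) ^ (k α) :=
    Finset.prod_nonneg fun α _ => Real.rpow_nonneg (hA0 α).le _
  have hprod : ∏ α ∈ R, (|(inner ℝ x α : ℝ)| + 2 * r) ^ (k α)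
      ≤ 2 ^ K * ∏ α ∈ R, (|(inner ℝ x α : ℝ)| + r) ^ (k α) := by
    rw [hKdef, Real.rpow_sum_of_pos two_pos, ← Finset.prod_mul_distrib]
    refine Finset.prod_le_prod (fun α hα => Real.rpow_nonneg (by positivity) _)
      fun α hα => ?_
    rw [← Real.mul_rpow (by norm_num) (hA0 α).le]
    refine Real.rpow_le_rpow (by positivity) (by linarith [abs_nonneg (inner ℝ x α : ℝ)])
      (hk α hα)
  calc (volume.withDensity
        (fun x => ENNReal.ofReal (∏ α ∈ R, |(inner ℝ x α : ℝ)| ^ (k α))))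
        (closedBall x (2 * r))
      ≤ ENNReal.ofReal (c₂ * (2 * r) ^ N *
          ∏ α ∈ R, (|(inner ℝ x α : ℝ)| + 2 * r) ^ (k α)) :=
        (hest x (2 * r) (by linarith)).2
    _ ≤ ENNReal.ofReal ((c₂ * 2 ^ N * 2 ^ K / c₁) *
          (c₁ * r ^ N * ∏ α ∈ R, (|(inner ℝ x α : ℝ)| + r) ^ (k α))) := by
        apply ENNReal.ofReal_le_ofReal
        have he : (c₂ * 2 ^ N * 2 ^ K / c₁) *
            (c₁ * r ^ N * ∏ α ∈ R, (|(inner ℝ x α : ℝ)| + r) ^ (k α))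
            = c₂ * (2 * r) ^ N *
              (2 ^ K * ∏ α ∈ R, (|(inner ℝ x α : ℝ)| + r) ^ (k α)) := by
          rw [mul_pow]
          field_simp
        rw [he]
        exact mul_le_mul_of_nonneg_left hprod (by positivity)
    _ = ENNReal.ofReal (c₂ * 2 ^ N * 2 ^ K / c₁) *
          ENNReal.ofReal (c₁ * r ^ N * ∏ α ∈ R, (|(inner ℝ x α : ℝ)| + r) ^ (k α)) :=
        ENNReal.ofReal_mul (by positivity)
    _ ≤ ENNReal.ofReal (c₂ * 2 ^ N * 2 ^ K / c₁) *
          (volume.withDensity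
            (fun x => ENNReal.ofReal (∏ α ∈ R, |(inner ℝ x α : ℝ)| ^ (k α))))
            (closedBall x r) :=
        mul_le_mul_right (hest x r hr).1 _
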